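/- Equality case of the maximum entropy principle: if X has density f(x) = c(m,s)·exp(−τ‖x‖^s) with τ = m/(s·E[‖X‖^s]) and c(m,s) = Γ(m/2+1)τ^{m/s}/(Γ(m/s+1)π^{m/2}), then H(f) = (m/s)·log( c₁(m,s)·E[‖X‖^s] ), where c₁(m,s) = (π^{m/2}Γ(m/s+1)/Γ(m/2+1))^{s/m}·(s·e/m). -/

import Mathlib

open Real MeasureTheory Filter

lemma gg_aux_bound (a s τ r : ℝ) (ha : 0 ≤ a) (hs : 0 < s) (hτ : 0 < τ) (hr : 0 ≤ r) :
    ∃ C : ℝ, ∀ y : ℝ, 0 ≤ y →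
      y ^ a * Real.exp (-τ * y ^ s) * (1 + y) ^ r ≤ C := by
  set h : ℝ → ℝ := fun y => y ^ a * Real.exp (-τ * y ^ s) * (1 + y) ^ r with hh
  have hcont : Continuous h :=
    ((Real.continuous_rpow_const ha).mul
      (Real.continuous_exp.comp ((continuous_const.mul
        (Real.continuous_rpow_const hs.le))))).mul
      ((Real.continuous_rpow_const hr).comp (continuous_const.add continuous_id))
  have t3 : Tendsto (fun y : ℝ => y ^ (a + r) * Real.exp (-τ * y ^ s)) atTop (nhds 0) := by
    have t1 : Tendsto (fun u : ℝ => u ^ ((a + r) / s) * Real.exp (-τ * u)) atTop (nhds 0) :=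
      tendsto_rpow_mul_exp_neg_mul_atTop_nhds_zero _ τ hτ
    have t2 : Tendsto (fun y : ℝ => y ^ s) atTop atTop := tendsto_rpow_atTop hs
    refine (t1.comp t2).congr' ?_
    filter_upwards [eventually_gt_atTop (0 : ℝ)] with y hy
    simp only [Function.comp_apply]
    rw [← Real.rpow_mul hy.le]
    congr 2
    field_simp
  have htend : Tendsto h atTop (nhds 0) := by
    have hg : Tendsto (fun y : ℝ => 2 ^ r * (y ^ (a + r) * Real.exp (-τ * y ^ s)))
        atTop (nhds 0) := by simpa using t3.const_mul ((2:ℝ) ^ r)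
    refine squeeze_zero' ?_ ?_ hg
    · filter_upwards [eventually_gt_atTop (0 : ℝ)] with y hy
      have : (0:ℝ) < 1 + y := by linarith
      positivity
    · filter_upwards [eventually_ge_atTop (1 : ℝ)] with y hy
      have hy0 : (0:ℝ) < y := by linarith
      have h1 : (1 + y) ^ r ≤ (2 * y) ^ r :=
        Real.rpow_le_rpow (by linarith) (by linarith) hr
      have h2 : (2 * y) ^ r = 2 ^ r * y ^ r := Real.mul_rpow (by norm_num) hy0.le
      have h3 : y ^ a * y ^ r = y ^ (a + r) := (Real.rpow_add hy0 a r).symm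
      have hpos : 0 ≤ y ^ a * Real.exp (-τ * y ^ s) := by positivity
      calc y ^ a * Real.exp (-τ * y ^ s) * (1 + y) ^ r
          ≤ y ^ a * Real.exp (-τ * y ^ s) * (2 ^ r * y ^ r) := by
            rw [← h2]; exact mul_le_mul_of_nonneg_left h1 hpos
        _ = 2 ^ r * (y ^ (a + r) * Real.exp (-τ * y ^ s)) := by
            rw [← h3]; ring
  obtain ⟨N, hN⟩ := (htend.eventually (eventually_le_nhds (by norm_num : (0:ℝ) < 1))).exists_forall_of_atTop
  obtain ⟨C, hC⟩ := (isCompact_Icc (a := (0:ℝ)) (b := N)).exists_bound_of_continuousOn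
    hcont.continuousOn
  refine ⟨max C 1, fun y hy => ?_⟩
  rcases le_total y N with h | h
  · exact le_max_of_le_left ((le_abs_self _).trans (hC y ⟨hy, h⟩))
  · exact le_max_of_le_right (hN y h)

lemma gg_integrable (m : ℕ) (a s τ : ℝ) (ha : 0 ≤ a) (hs : 0 < s) (hτ : 0 < τ) :
    Integrable (fun x : EuclideanSpace ℝ (Fin m) => ‖x‖ ^ a * Real.exp (-τ * ‖x‖ ^ s)) := by
  obtain ⟨C, hC⟩ := gg_aux_bound a s τ (m + 1) ha hs hτ (by positivity)
  have hint : Integrable (fun x : EuclideanSpace ℝ (Fin m) => C * (1 + ‖x‖) ^ (-((m:ℝ) + 1))) :=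
    (integrable_one_add_norm (by rw [finrank_euclideanSpace_fin]; linarith)).const_mul C
  refine hint.mono' ?_ (ae_of_all _ fun x => ?_)
  · exact (Measurable.aestronglyMeasurable (by fun_prop))
  · have hx : (0:ℝ) < 1 + ‖x‖ := by positivity
    have hb := hC ‖x‖ (norm_nonneg x)
    rw [Real.norm_of_nonneg (by positivity), Real.rpow_neg hx.le, mul_comm C,
      inv_mul_eq_div, le_div_iff₀ (by positivity)]
    exact hb
open Real MeasureTheory Filter

lemma gg_integral (m : ℕ) (hm : 1 ≤ m) (a s τ : ℝ) (ha : 0 ≤ a) (hs : 0 < s) (hτ : 0 < τ) :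
    ∫ x : EuclideanSpace ℝ (Fin m), ‖x‖ ^ a * Real.exp (-τ * ‖x‖ ^ s)
      = (m : ℝ) * (Real.pi ^ ((m:ℝ) / 2) / Real.Gamma ((m:ℝ) / 2 + 1)) *
        (τ ^ (-(((m:ℝ) + a)) / s) * (1 / s) * Real.Gamma (((m:ℝ) + a) / s)) := by
  have hm0 : (0:ℝ) < m := by exact_mod_cast hm
  haveI : Nontrivial (EuclideanSpace ℝ (Fin m)) := by
    refine Module.nontrivial_of_finrank_pos (R := ℝ) ?_
    rw [finrank_euclideanSpace_fin]; omega
  have hd : Module.finrank ℝ (EuclideanSpace ℝ (Fin m)) = m := finrank_euclideanSpace_fin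
  have key := MeasureTheory.integral_fun_norm_addHaar (volume : Measure (EuclideanSpace ℝ (Fin m)))
    (fun y : ℝ => y ^ a * Real.exp (-τ * y ^ s))
  rw [hd] at key
  rw [key]
  have hV : (volume (Metric.ball (0 : EuclideanSpace ℝ (Fin m)) 1)).toReal
      = Real.pi ^ ((m:ℝ) / 2) / Real.Gamma ((m:ℝ) / 2 + 1) := by
    haveI : Nonempty (Fin m) := ⟨⟨0, hm⟩⟩
    rw [EuclideanSpace.volume_ball]
    have hΓ : 0 < Real.Gamma ((Fintype.card (Fin m) : ℝ) / 2 + 1) :=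
      Real.Gamma_pos_of_pos (by positivity)
    rw [ENNReal.ofReal_one, one_pow, one_mul, ENNReal.toReal_ofReal (by positivity)]
    rw [Fintype.card_fin] at hΓ ⊢
    congr 1
    rw [Real.sqrt_eq_rpow, ← Real.rpow_natCast (Real.pi ^ ((1:ℝ)/2)) m,
      ← Real.rpow_mul Real.pi_pos.le]
    congr 1; ring
  have hinner : ∫ y in Set.Ioi (0:ℝ), y ^ (m - 1) • (y ^ a * Real.exp (-τ * y ^ s))
      = τ ^ (-(((m:ℝ) + a)) / s) * (1 / s) * Real.Gamma (((m:ℝ) + a) / s) := by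
    rw [setIntegral_congr_fun measurableSet_Ioi
      (g := fun y : ℝ => y ^ ((m:ℝ) - 1 + a) * Real.exp (-τ * y ^ s)) ?_]
    · rw [integral_rpow_mul_exp_neg_mul_rpow hs (by linarith) hτ]
      have : (m:ℝ) - 1 + a + 1 = (m:ℝ) + a := by ring
      rw [this]
    · intro y hy
      have hy0 : (0:ℝ) < y := hy
      dsimp only
      rw [smul_eq_mul, ← mul_assoc, ← Real.rpow_natCast y (m - 1),
        Nat.cast_sub hm, Nat.cast_one, ← Real.rpow_add hy0]
  rw [hinner, measureReal_def, hV, nsmul_eq_mul, smul_eq_mul]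
  ring
theorem gg_max_entropy_equality (m : ℕ) (hm : 1 ≤ m) (s τ : ℝ) (hs : 0 < s) (hτ : 0 < τ)
    (f : EuclideanSpace ℝ (Fin m) → ℝ)
    (hf : ∀ x, f x = (Real.Gamma (m / 2 + 1) * τ ^ ((m : ℝ) / s) /
        (Real.Gamma (m / s + 1) * Real.pi ^ ((m : ℝ) / 2))) * Real.exp (-τ * ‖x‖ ^ s))
    (hτ_eq : τ = m / (s * ∫ x, ‖x‖ ^ s * f x)) :
    (-∫ x, f x * Real.log (f x)) =
      (m / s) * Real.log
        (((Real.pi ^ ((m : ℝ) / 2) * Real.Gamma (m / s + 1) / Real.Gamma (m / 2 + 1)) ^ (s / (m : ℝ))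
            * (s * Real.exp 1 / m)) *
          ∫ x, ‖x‖ ^ s * f x) := by
  clear hτ_eq
  have hm0 : (0:ℝ) < m := by exact_mod_cast hm
  have hms : (0:ℝ) < (m:ℝ) / s := by positivity
  have hΓ2 : 0 < Real.Gamma ((m:ℝ) / 2 + 1) := Real.Gamma_pos_of_pos (by positivity)
  have hΓs : 0 < Real.Gamma ((m:ℝ) / s + 1) := Real.Gamma_pos_of_pos (by positivity)
  have hΓm : 0 < Real.Gamma ((m:ℝ) / s) := Real.Gamma_pos_of_pos hms
  have hπ : (0:ℝ) < Real.pi ^ ((m:ℝ) / 2) := Real.rpow_pos_of_pos Real.pi_pos _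
  have hτp : (0:ℝ) < τ ^ ((m:ℝ) / s) := Real.rpow_pos_of_pos hτ _
  set c : ℝ := Real.Gamma (m / 2 + 1) * τ ^ ((m : ℝ) / s) /
      (Real.Gamma (m / s + 1) * Real.pi ^ ((m : ℝ) / 2)) with hc_def
  have hc : 0 < c := div_pos (mul_pos hΓ2 hτp) (mul_pos hΓs hπ)
  have hfe : f = fun x => c * Real.exp (-τ * ‖x‖ ^ s) := funext hf
  subst hfe
  set K : ℝ := Real.pi ^ ((m:ℝ) / 2) * Real.Gamma ((m:ℝ) / s + 1) / Real.Gamma ((m:ℝ) / 2 + 1)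
    with hK_def
  have hK : 0 < K := div_pos (mul_pos hπ hΓs) hΓ2
  -- integral values
  have J0 := gg_integral m hm 0 s τ le_rfl hs hτ
  simp only [Real.rpow_zero, one_mul, add_zero] at J0
  have Js := gg_integral m hm s s τ hs.le hs hτ
  have int0 : Integrable (fun x : EuclideanSpace ℝ (Fin m) => Real.exp (-τ * ‖x‖ ^ s)) := by
    have := gg_integrable m 0 s τ le_rfl hs hτ
    simpa using this
  have ints : Integrable
      (fun x : EuclideanSpace ℝ (Fin m) => ‖x‖ ^ s * Real.exp (-τ * ‖x‖ ^ s)) :=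
    gg_integrable m s s τ hs.le hs hτ
  have hΓadd : Real.Gamma ((m:ℝ) / s + 1) = ((m:ℝ) / s) * Real.Gamma ((m:ℝ) / s) :=
    Real.Gamma_add_one hms.ne'
  have hI : (∫ x : EuclideanSpace ℝ (Fin m), c * Real.exp (-τ * ‖x‖ ^ s)) = 1 := by
    rw [integral_const_mul, J0, hc_def, hΓadd, neg_div, Real.rpow_neg hτ.le]
    field_simp
  have hE : (∫ x : EuclideanSpace ℝ (Fin m), ‖x‖ ^ s * (c * Real.exp (-τ * ‖x‖ ^ s)))
      = (m:ℝ) / (s * τ) := by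
    have hcomm : (fun x : EuclideanSpace ℝ (Fin m) => ‖x‖ ^ s * (c * Real.exp (-τ * ‖x‖ ^ s)))
        = fun x : EuclideanSpace ℝ (Fin m) => c * (‖x‖ ^ s * Real.exp (-τ * ‖x‖ ^ s)) :=
      funext fun x => by ring
    rw [hcomm, integral_const_mul, Js]
    have h1 : ((m:ℝ) + s) / s = (m:ℝ) / s + 1 := by field_simp
    rw [neg_div, h1, Real.rpow_neg hτ.le, Real.rpow_add_one hτ.ne', hc_def]
    field_simp
  -- split the entropy integral
  have hlog : ∀ x : EuclideanSpace ℝ (Fin m),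
      (c * Real.exp (-τ * ‖x‖ ^ s)) * Real.log (c * Real.exp (-τ * ‖x‖ ^ s))
        = Real.log c * (c * Real.exp (-τ * ‖x‖ ^ s))
          + (-τ) * (‖x‖ ^ s * (c * Real.exp (-τ * ‖x‖ ^ s))) := by
    intro x
    rw [Real.log_mul hc.ne' (Real.exp_ne_zero _), Real.log_exp]
    ring
  have hsplit : (∫ x : EuclideanSpace ℝ (Fin m),
        (c * Real.exp (-τ * ‖x‖ ^ s)) * Real.log (c * Real.exp (-τ * ‖x‖ ^ s)))
      = Real.log c * (∫ x : EuclideanSpace ℝ (Fin m), c * Real.exp (-τ * ‖x‖ ^ s))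
        + (-τ) * ∫ x : EuclideanSpace ℝ (Fin m), ‖x‖ ^ s * (c * Real.exp (-τ * ‖x‖ ^ s)) := by
    rw [← integral_const_mul, ← integral_const_mul,
      ← integral_add ((int0.const_mul c).const_mul _)
        (((ints.const_mul c).congr (ae_of_all _ fun x => by ring)).const_mul _)]
    exact integral_congr_ae (ae_of_all _ hlog)
  rw [hsplit, hI, hE]
  -- final algebra with logarithms
  have hcK : c = τ ^ ((m:ℝ) / s) / K := by
    rw [hc_def, hK_def]
    field_simp
  have hArg : (K ^ (s / (m:ℝ)) * (s * Real.exp 1 / m)) * ((m:ℝ) / (s * τ))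
      = K ^ (s / (m:ℝ)) * Real.exp 1 / τ := by
    field_simp
  rw [hArg, hcK, Real.log_div hτp.ne' hK.ne', Real.log_rpow hτ,
    Real.log_div (by positivity) hτ.ne',
    Real.log_mul (by positivity) (Real.exp_ne_zero 1), Real.log_rpow hK, Real.log_exp]
  field_simp
  ring
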